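/- Let I be a monomial ideal generated in degree d and u a monomial of degree d−1. Then I : u is generated by variables if and only if there exists a subset A of [n] such that u·x_i ∈ G(I) for all i ∈ A and for every v ∈ G(I), supp(lcm(v,u)/u) ∩ A ≠ ∅. -/

import Mathlib

open MvPolynomial

/-- The monomial `x^u` in the polynomial ring `K[x_i : i ∈ σ]`. -/
noncomputable def mon (K : Type) [Field K] {σ : Type} (u : σ →₀ ℕ) :
    MvPolynomial σ K := MvPolynomial.monomial u 1

/-- Total degree of an exponent vector. -/
def mdeg {σ : Type} (u : σ →₀ ℕ) : ℕ := u.sum fun _ e => e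

/-- The monomial ideal generated by the monomials with exponent vectors in `S`. -/
noncomputable def monIdeal (K : Type) [Field K] {σ : Type} (S : Set (σ →₀ ℕ)) :
    Ideal (MvPolynomial σ K) := Ideal.span ((mon K) '' S)

/-- An ideal is generated by variables. -/
def genByVars {K : Type} [Field K] {σ : Type} (J : Ideal (MvPolynomial σ K)) : Prop :=
  ∃ A : Set σ, J = Ideal.span ((fun i => (X i : MvPolynomial σ K)) '' A)

/-- An ideal is generated by linear forms. -/
def genByLinForms {K : Type} [Field K] {σ : Type} (J : Ideal (MvPolynomial σ K)) : Prop :=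
  ∃ S : Set (MvPolynomial σ K), (∀ f ∈ S, f.IsHomogeneous 1) ∧ J = Ideal.span S

/-- `S` is an antichain under divisibility of monomials, i.e. it is the minimal
monomial generating set `G(I)` of the monomial ideal `I` it generates. -/
def IsMinGenSet {σ : Type} (S : Set (σ →₀ ℕ)) : Prop :=
  ∀ u ∈ S, ∀ v ∈ S, u ≤ v → u = v

/-- A monomial ideal, presented by its minimal monomial generating set `S`, is
quasi-linear if for every `u ∈ S` the colon ideal `(G(I) \ {u}) : u` is generated
by variables. -/
def QuasiLinear (K : Type) [Field K] {σ : Type} (S : Set (σ →₀ ℕ)) : Prop :=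
  ∀ u ∈ S, genByVars (Submodule.colon (monIdeal K (S \ {u})) (Ideal.span {mon K u}))

/-- A minimal graded free resolution of an ideal `I` in a polynomial ring:
graded free modules `F i = ⊕_k R(-dg i k)` of rank `b i`, differentials
`F (i+1) → F i` given by the matrices `A i`, whose entries are homogeneous of the
appropriate degree and of positive degree (this is minimality, i.e. all entries lie
in the graded maximal ideal), together with an augmentation `F 0 → I` given by the
homogeneous generators `g`, everything being exact. -/
structure MinFreeRes {K : Type} [Field K] {σ : Type} (I : Ideal (MvPolynomial σ K)) where
  b : ℕ → ℕ
  dg : (i : ℕ) → Fin (b i) → ℕ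
  g : Fin (b 0) → MvPolynomial σ K
  A : (i : ℕ) → Matrix (Fin (b i)) (Fin (b (i+1))) (MvPolynomial σ K)
  g_hom : ∀ k, (g k).IsHomogeneous (dg 0 k)
  A_hom : ∀ i k l, A i k l = 0 ∨
    ((A i k l).IsHomogeneous (dg (i+1) l - dg i k) ∧ dg i k < dg (i+1) l)
  aug_range : LinearMap.range (Fintype.linearCombination (MvPolynomial σ K)
      g) = I
  aug_exact : LinearMap.ker (Fintype.linearCombination (MvPolynomial σ K)
      g) = LinearMap.range ((A 0).mulVecLin)
  is_exact : ∀ i, LinearMap.ker ((A i).mulVecLin) = LinearMap.range ((A (i+1)).mulVecLin)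

/-- The graded Betti number `β_{i,j}` read off from a minimal graded free resolution:
the number of generators of the `i`-th free module of degree `j`. -/
noncomputable def MinFreeRes.beta {K : Type} [Field K] {σ : Type}
    {I : Ideal (MvPolynomial σ K)} (res : MinFreeRes I) (i j : ℕ) : ℕ :=
  (Finset.univ.filter fun k => res.dg i k = j).card

/-- `I` has a `d`-linear resolution: it has a minimal graded free resolution in which the
`i`-th free module is generated entirely in degree `i + d`, i.e. `β_{i,j}(I) = 0`
whenever `j - i ≠ d`. -/
def HasLinRes {K : Type} [Field K] {σ : Type} (I : Ideal (MvPolynomial σ K))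
    (d : ℕ) : Prop :=
  ∃ res : MinFreeRes I, ∀ i k, res.dg i k = i + d

/-- `reg I ≤ r`: a minimal graded free resolution of `I` has all generators of the
`i`-th free module in degrees `≤ i + r`, i.e. `β_{i,j}(I) = 0` whenever `j - i > r`. -/
def RegLE {K : Type} [Field K] {σ : Type} (I : Ideal (MvPolynomial σ K)) (r : ℕ) : Prop :=
  ∃ res : MinFreeRes I, ∀ i k, res.dg i k ≤ i + r

lemma mdeg_add' {σ : Type} (a b : σ →₀ ℕ) : mdeg (a + b) = mdeg a + mdeg b :=
  Finsupp.sum_add_index' (fun _ => rfl) (fun _ _ _ => rfl)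

lemma mdeg_eq_zero' {σ : Type} {a : σ →₀ ℕ} (h : mdeg a = 0) : a = 0 := by
  ext i
  by_contra hi
  exact hi (Finset.sum_eq_zero_iff.mp h i (Finsupp.mem_support_iff.mpr hi))

lemma eq_of_le_of_mdeg_le' {σ : Type} {v w : σ →₀ ℕ} (h : v ≤ w) (hm : mdeg w ≤ mdeg v) :
    v = w := by
  have hw : v + (w - v) = w := add_tsub_cancel_of_le h
  have : mdeg v + mdeg (w - v) = mdeg w := by rw [← mdeg_add', hw]
  rw [← hw, mdeg_eq_zero' (a := w - v) (by omega), add_zero]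

lemma mem_monIdeal' {K : Type} [Field K] {σ : Type} {S : Set (σ →₀ ℕ)}
    {f : MvPolynomial σ K} :
    f ∈ monIdeal K S ↔ ∀ m ∈ f.support, ∃ v ∈ S, v ≤ m :=
  mem_ideal_span_monomial_image


/-- Let `I` be a monomial ideal generated in degree `d` (with minimal
monomial generating set `S`) and `u` a monomial of degree `d − 1`.  Then `I : u` is
generated by variables if and only if there exists a subset `A ⊆ [n]` such that
`u·x_i ∈ G(I)` for all `i ∈ A` and for every `v ∈ G(I)`,
`supp(lcm(v,u)/u) ∩ A ≠ ∅`.  (Such a `u` is called strongly linear over `I`.) -/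
theorem stmt_13 {K : Type} [Field K] {n d : ℕ} (hd : 1 ≤ d) (S : Set (Fin n →₀ ℕ))
    (hmin : IsMinGenSet S) (hdeg : ∀ v ∈ S, mdeg v = d)
    (u : Fin n →₀ ℕ) (hu : mdeg u = d - 1) :
    genByVars (Submodule.colon (monIdeal K S) (Ideal.span {mon K u}))
    ↔ ∃ A : Set (Fin n), (∀ i ∈ A, u + Finsupp.single i 1 ∈ S) ∧
        ∀ v ∈ S, ∃ i ∈ A, i ∈ ((v ⊔ u) - u).support := by
  classical
  have hcolon : ∀ f : MvPolynomial (Fin n) K,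
      f ∈ Submodule.colon (monIdeal K S) (Ideal.span {mon K u}) ↔
        f * mon K u ∈ monIdeal K S := by
    intro f
    rw [← Ideal.submodule_span_eq, Submodule.mem_colon_span_singleton, smul_eq_mul]
  constructor
  · rintro ⟨A, hA⟩
    refine ⟨A, ?_, ?_⟩
    · intro i hi
      have hX : (X i : MvPolynomial (Fin n) K) ∈
          Submodule.colon (monIdeal K S) (Ideal.span {mon K u}) := by
        rw [hA]
        exact Ideal.subset_span ⟨i, hi, rfl⟩
      rw [hcolon] at hX
      have hprod : (X i : MvPolynomial (Fin n) K) * mon K u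
          = monomial (u + Finsupp.single i 1) 1 := by
        rw [mon, X, monomial_mul, one_mul, add_comm]
      rw [hprod] at hX
      obtain ⟨v, hv, hle⟩ := mem_monIdeal'.mp hX (u + Finsupp.single i 1)
        (by simp [mem_support_iff])
      have hdv : mdeg (u + Finsupp.single i 1) ≤ mdeg v := by
        rw [mdeg_add', hdeg v hv, hu]
        simp [mdeg, Finsupp.sum_single_index]
        omega
      rwa [eq_of_le_of_mdeg_le' hle hdv] at hv
    · intro v hv
      set m := (v ⊔ u) - u with hm
      have hmem : mon K m ∈ Ideal.span ((fun i => (X i : MvPolynomial (Fin n) K)) '' A) := by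
        rw [← hA, hcolon]
        have hprod : (mon K m : MvPolynomial (Fin n) K) * mon K u = monomial (v ⊔ u) 1 := by
          rw [mon, mon, monomial_mul, one_mul, hm, tsub_add_cancel_of_le le_sup_right]
        rw [hprod]
        refine mem_monIdeal'.mpr fun w hw => ⟨v, hv, ?_⟩
        rw [support_monomial, if_neg one_ne_zero, Finset.mem_singleton] at hw
        rw [hw]
        exact le_sup_left
      obtain ⟨i, hi, hne⟩ := mem_ideal_span_X_image.mp hmem m (by simp [mon, mem_support_iff])
      exact ⟨i, hi, Finsupp.mem_support_iff.mpr hne⟩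
  · rintro ⟨A, hA1, hA2⟩
    refine ⟨A, le_antisymm ?_ ?_⟩
    · intro f hf
      rw [hcolon] at hf
      rw [mem_ideal_span_X_image]
      intro m hm
      have hmem : m + u ∈ (f * mon K u).support := by
        rw [mem_support_iff, mon, coeff_mul_monomial, mul_one]
        exact mem_support_iff.mp hm
      obtain ⟨v, hv, hle⟩ := mem_monIdeal'.mp hf _ hmem
      obtain ⟨i, hi, hsupp⟩ := hA2 v hv
      refine ⟨i, hi, ?_⟩
      have hle2 : (v ⊔ u) - u ≤ m := by
        rw [tsub_le_iff_right]
        exact sup_le hle le_add_self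
      have := Finsupp.mem_support_iff.mp hsupp
      have := hle2 i
      omega
    · rw [Ideal.span_le]
      rintro _ ⟨i, hi, rfl⟩
      rw [SetLike.mem_coe, hcolon]
      have hprod : (X i : MvPolynomial (Fin n) K) * mon K u
          = monomial (u + Finsupp.single i 1) 1 := by
        rw [mon, X, monomial_mul, one_mul, add_comm]
      rw [hprod]
      refine mem_monIdeal'.mpr fun w hw => ⟨u + Finsupp.single i 1, hA1 i hi, ?_⟩
      rw [support_monomial, if_neg one_ne_zero, Finset.mem_singleton] at hw
      rw [hw]
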